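/- arXiv:1911.05272 — 3 statements merged into one kernel-verified Lean document; each statement's English description precedes it below -/
import Mathlib

section
/- For every real number a, the integral ∫₀^∞ erf(a x / √2) · exp(-x²/2) dx equals √(2/π) · arctan(a). -/
open Real MeasureTheory Set

noncomputable def erf (z : ℝ) : ℝ := 2 / Real.sqrt π * ∫ u in (0:ℝ)..z, Real.exp (-u ^ 2)

lemma gauss_moment {b : ℝ} (hb : 0 < b) :
    ∫ x in Ioi (0:ℝ), x * Real.exp (-b * x ^ 2) = (2 * b)⁻¹ := by
  have hd : ∀ x ∈ Ici (0:ℝ), HasDerivAt (fun y => -(2*b)⁻¹ * Real.exp (-b * y ^ 2))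
      (x * Real.exp (-b * x ^ 2)) x := by
    intro x _
    have h1 : HasDerivAt (fun y : ℝ => -b * y ^ 2) (-b * (2 * x)) x := by
      simpa using (hasDerivAt_pow 2 x).const_mul (-b)
    have h2 := (h1.exp).const_mul (-(2*b)⁻¹)
    refine h2.congr_deriv ?_
    have h3 : (2*b)⁻¹ * (2*b) = 1 := inv_mul_cancel₀ (by positivity)
    linear_combination (x * Real.exp (-b * x ^ 2)) * h3
  have ht : Filter.Tendsto (fun y : ℝ => -(2*b)⁻¹ * Real.exp (-b * y ^ 2))
      Filter.atTop (nhds 0) := by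
    have h1 : Filter.Tendsto (fun y : ℝ => -b * y ^ 2) Filter.atTop Filter.atBot := by
      have h0 : Filter.Tendsto (fun y : ℝ => y ^ 2) Filter.atTop Filter.atTop :=
        Filter.tendsto_pow_atTop (by norm_num)
      simpa [neg_mul] using Filter.tendsto_neg_atBot_iff.mpr (h0.const_mul_atTop hb)
    have h2 := Real.tendsto_exp_atBot.comp h1
    simpa using h2.const_mul (-(2*b)⁻¹)
  rw [integral_Ioi_of_hasDerivAt_of_tendsto' hd
    ((integrable_mul_exp_neg_mul_sq hb).integrableOn) ht]
  simp

lemma erf_neg (z : ℝ) : erf (-z) = - erf z := by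
  unfold erf
  rw [← mul_neg]
  congr 1
  have h : (∫ u in (0:ℝ)..(-z), Real.exp (-u ^ 2))
      = ∫ u in (0:ℝ)..(-z), Real.exp (-(-u) ^ 2) := by
    simp
  rw [h, intervalIntegral.integral_comp_neg (fun u => Real.exp (-u ^ 2)), neg_neg, neg_zero,
    intervalIntegral.integral_symm]

lemma stmt3_nonneg (a : ℝ) (ha : 0 ≤ a) :
    ∫ x in Ioi (0 : ℝ), erf (a * x / Real.sqrt 2) * Real.exp (-x ^ 2 / 2) =
      Real.sqrt (2 / π) * Real.arctan a := by
  have hpi : (0:ℝ) < π := Real.pi_pos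
  have hs2 : (0:ℝ) < Real.sqrt 2 := by positivity
  have h2sq : Real.sqrt 2 * Real.sqrt 2 = 2 := Real.mul_self_sqrt (by norm_num)
  have hsqdiv : Real.sqrt (2/π) = Real.sqrt 2 / Real.sqrt π := Real.sqrt_div (by norm_num) π
  have hconst : 2 / Real.sqrt π / Real.sqrt 2 = Real.sqrt (2/π) := by
    rw [hsqdiv, div_div, div_eq_div_iff (by positivity) (by positivity)]
    linear_combination (-Real.sqrt π) * h2sq
  have key : ∀ x ∈ Ioi (0:ℝ), erf (a * x / Real.sqrt 2) * Real.exp (-x ^ 2 / 2)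
      = Real.sqrt (2/π) * ∫ t in Ioc (0:ℝ) a, x * Real.exp (-((1+t^2)/2) * x^2) := by
    intro x hx
    have hx0 : (0:ℝ) < x := hx
    have hc : (0:ℝ) < x / Real.sqrt 2 := by positivity
    unfold erf
    have hsub : (∫ u in (0:ℝ)..(a * x / Real.sqrt 2), Real.exp (-u ^ 2))
        = (x / Real.sqrt 2) * ∫ t in (0:ℝ)..a, Real.exp (-(x / Real.sqrt 2 * t) ^ 2) := by
      rw [intervalIntegral.integral_comp_mul_left (fun u => Real.exp (-u ^ 2)) hc.ne',
        smul_eq_mul, ← mul_assoc, mul_inv_cancel₀ hc.ne', one_mul, mul_zero]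
      rw [show x / Real.sqrt 2 * a = a * x / Real.sqrt 2 by ring]
    have hexp : ∀ t : ℝ, x * Real.exp (-((1+t^2)/2) * x^2)
        = (x * Real.exp (-x^2/2)) * Real.exp (-(x / Real.sqrt 2 * t) ^ 2) := by
      intro t
      rw [mul_assoc, ← Real.exp_add]
      congr 2
      field_simp
      linear_combination (-t^2) * Real.sq_sqrt (show (0:ℝ) ≤ 2 by norm_num)
    rw [← intervalIntegral.integral_of_le ha, hsub]
    rw [intervalIntegral.integral_congr (g := fun t =>
      (x * Real.exp (-x^2/2)) * Real.exp (-(x / Real.sqrt 2 * t) ^ 2)) (fun t _ => hexp t)]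
    rw [intervalIntegral.integral_const_mul, ← hconst]
    ring
  rw [setIntegral_congr_fun measurableSet_Ioi key, MeasureTheory.integral_const_mul]
  congr 1
  have hint : Integrable (Function.uncurry fun x t : ℝ => x * Real.exp (-((1+t^2)/2) * x^2))
      ((volume.restrict (Ioi (0:ℝ))).prod (volume.restrict (Ioc (0:ℝ) a))) := by
    have hmeas : AEStronglyMeasurable
        (Function.uncurry fun x t : ℝ => x * Real.exp (-((1+t^2)/2) * x^2))
        ((volume.restrict (Ioi (0:ℝ))).prod (volume.restrict (Ioc (0:ℝ) a))) := by
      apply Continuous.aestronglyMeasurable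
      apply Continuous.mul continuous_fst
      exact Real.continuous_exp.comp (by fun_prop)
    have hdom : Integrable (fun p : ℝ × ℝ => (p.1 * Real.exp (-(1/2 : ℝ) * p.1 ^ 2)) * 1)
        ((volume.restrict (Ioi (0:ℝ))).prod (volume.restrict (Ioc (0:ℝ) a))) := by
      exact Integrable.mul_prod ((integrable_mul_exp_neg_mul_sq (by norm_num)).restrict)
        (integrableOn_const measure_Ioc_lt_top.ne)
    apply hdom.mono' hmeas
    rw [Measure.prod_restrict]
    filter_upwards [ae_restrict_mem (measurableSet_Ioi.prod measurableSet_Ioc)] with p hp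
    obtain ⟨hp1, hp2⟩ := hp
    have hx0 : (0:ℝ) < p.1 := hp1
    simp only [Function.uncurry, Real.norm_eq_abs, abs_mul, abs_of_pos hx0,
      abs_of_pos (Real.exp_pos _), mul_one]
    apply mul_le_mul_of_nonneg_left _ hx0.le
    apply Real.exp_le_exp.mpr
    nlinarith [sq_nonneg p.2, sq_nonneg p.1]
  rw [MeasureTheory.integral_integral_swap hint]
  have hin : ∀ t ∈ Ioc (0:ℝ) a,
      (∫ x in Ioi (0:ℝ), x * Real.exp (-((1+t^2)/2) * x^2)) = (1+t^2)⁻¹ := by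
    intro t _
    rw [gauss_moment (by positivity : (0:ℝ) < (1+t^2)/2)]
    congr 1
    ring
  rw [setIntegral_congr_fun measurableSet_Ioc hin, ← intervalIntegral.integral_of_le ha]
  simp [integral_inv_one_add_sq]

theorem stmt3 (a : ℝ) :
    ∫ x in Ioi (0 : ℝ), erf (a * x / Real.sqrt 2) * Real.exp (-x ^ 2 / 2) =
      Real.sqrt (2 / π) * Real.arctan a := by
  rcases le_total 0 a with ha | ha
  · exact stmt3_nonneg a ha
  · have h : ∀ x : ℝ, erf (a * x / Real.sqrt 2) * Real.exp (-x ^ 2 / 2)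
        = -(erf (-a * x / Real.sqrt 2) * Real.exp (-x ^ 2 / 2)) := by
      intro x
      rw [show a * x / Real.sqrt 2 = -(-a * x / Real.sqrt 2) by ring, erf_neg]
      ring
    simp only [h]
    rw [MeasureTheory.integral_neg, stmt3_nonneg (-a) (by linarith)]
    simp [Real.arctan_neg]
end

section
/- For every real number a, the integral ∫₀^∞ x · erf(a x / √2) · exp(-x²/2) dx equals a / √(1 + a²). -/
open Real MeasureTheory Set Filter Topology

lemma gauss_cont : Continuous fun u : ℝ => Real.exp (-u ^ 2) := by
  continuity

lemma erf_hasDerivAt (z : ℝ) :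
    HasDerivAt erf (2 / Real.sqrt π * Real.exp (-z ^ 2)) z := by
  have h : HasDerivAt (fun b => ∫ u in (0:ℝ)..b, Real.exp (-u ^ 2)) (Real.exp (-z ^ 2)) z :=
    intervalIntegral.integral_hasDerivAt_right
      (gauss_cont.intervalIntegrable _ _)
      (gauss_cont.aestronglyMeasurable.stronglyMeasurableAtFilter)
      gauss_cont.continuousAt
  exact h.const_mul (2 / Real.sqrt π)

lemma erf_zero : erf 0 = 0 := by simp [erf]

lemma gauss_integrableOn : IntegrableOn (fun u : ℝ => Real.exp (-u ^ 2)) (Ioi 0) := by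
  simpa using (integrable_exp_neg_mul_sq one_pos).integrableOn

lemma erf_tendsto_one : Tendsto erf atTop (𝓝 1) := by
  have h : Tendsto (fun z => ∫ u in (0:ℝ)..z, Real.exp (-u ^ 2)) atTop
      (𝓝 (∫ u in Ioi (0:ℝ), Real.exp (-u ^ 2))) :=
    intervalIntegral_tendsto_integral_Ioi 0 gauss_integrableOn tendsto_id
  have hval : (∫ u in Ioi (0:ℝ), Real.exp (-u ^ 2)) = Real.sqrt π / 2 := by
    simpa using integral_gaussian_Ioi 1
  rw [hval] at h
  have hπ : (0:ℝ) < Real.sqrt π := Real.sqrt_pos.mpr Real.pi_pos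
  have hone : (2 / Real.sqrt π) * (Real.sqrt π / 2) = 1 := by field_simp
  have := h.const_mul (2 / Real.sqrt π); rw [hone] at this; exact this

lemma erf_abs_le (z : ℝ) : |erf z| ≤ 1 := by
  have hπ : (0:ℝ) < Real.sqrt π := Real.sqrt_pos.mpr Real.pi_pos
  have key : ∀ z : ℝ, 0 ≤ z → erf z ≤ 1 ∧ 0 ≤ erf z := by
    intro z hz
    have h1 : (∫ u in (0:ℝ)..z, Real.exp (-u ^ 2)) = ∫ u in Ioc (0:ℝ) z, Real.exp (-u ^ 2) := by
      rw [intervalIntegral.integral_of_le hz]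
    have hnn : 0 ≤ ∫ u in Ioc (0:ℝ) z, Real.exp (-u ^ 2) :=
      setIntegral_nonneg measurableSet_Ioc fun x _ => (Real.exp_pos _).le
    have hle : (∫ u in Ioc (0:ℝ) z, Real.exp (-u ^ 2)) ≤ ∫ u in Ioi (0:ℝ), Real.exp (-u ^ 2) := by
      apply setIntegral_mono_set gauss_integrableOn
      · exact Filter.Eventually.of_forall fun x => (Real.exp_pos _).le
      · exact HasSubset.Subset.eventuallyLE Ioc_subset_Ioi_self
    have hval : (∫ u in Ioi (0:ℝ), Real.exp (-u ^ 2)) = Real.sqrt π / 2 := by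
      simpa using integral_gaussian_Ioi 1
    constructor
    · rw [erf, h1]
      calc 2 / Real.sqrt π * ∫ u in Ioc (0:ℝ) z, Real.exp (-u ^ 2)
          ≤ 2 / Real.sqrt π * (Real.sqrt π / 2) :=
            mul_le_mul_of_nonneg_left (hval ▸ hle) (by positivity)
        _ = 1 := by field_simp
    · rw [erf, h1]; positivity
  have hodd : ∀ z : ℝ, erf (-z) = -erf z := by
    intro z
    have h : (∫ u in (0:ℝ)..(-z), Real.exp (-u ^ 2)) = -∫ u in (0:ℝ)..z, Real.exp (-u ^ 2) := by
      have := intervalIntegral.integral_comp_neg (a := 0) (b := z)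
        (fun u => Real.exp (-u ^ 2))
      simp only [neg_zero, neg_neg, neg_sq] at this ⊢
      rw [intervalIntegral.integral_symm, ← this]
    simp only [erf, h]; ring
  rcases le_or_gt 0 z with hz | hz
  · have := key z hz; rw [abs_le]; exact ⟨by linarith [this.2], this.1⟩
  · have h := key (-z) (by linarith)
    rw [hodd] at h
    rw [abs_le]; constructor <;> linarith [h.1, h.2]

lemma erf_continuous : Continuous erf :=
  continuous_iff_continuousAt.mpr fun z => (erf_hasDerivAt z).continuousAt

theorem stmt4 (a : ℝ) :
    ∫ x in Ioi (0 : ℝ), x * erf (a * x / Real.sqrt 2) * Real.exp (-x ^ 2 / 2) =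
      a / Real.sqrt (1 + a ^ 2) := by
  set b : ℝ := Real.sqrt (1 + a ^ 2) with hb
  have hb0 : 0 < b := Real.sqrt_pos.mpr (by positivity)
  have hbsq : b ^ 2 = 1 + a ^ 2 := Real.sq_sqrt (by positivity)
  have hs2 : (0:ℝ) < Real.sqrt 2 := by positivity
  have hs2sq : (Real.sqrt 2) ^ 2 = 2 := Real.sq_sqrt (by norm_num)
  have hπ : (0:ℝ) < Real.sqrt π := Real.sqrt_pos.mpr Real.pi_pos
  have hderiv : ∀ x ∈ Ici (0:ℝ), HasDerivAt (fun x =>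
      -Real.exp (-x ^ 2 / 2) * erf (a * x / Real.sqrt 2) + a / b * erf (b * x / Real.sqrt 2))
      (x * erf (a * x / Real.sqrt 2) * Real.exp (-x ^ 2 / 2)) x := by
    intro x _
    have h1 : HasDerivAt (fun x : ℝ => Real.exp (-x ^ 2 / 2))
        (-x * Real.exp (-x ^ 2 / 2)) x := by
      have hinner : HasDerivAt (fun x : ℝ => -x ^ 2 / 2) (-x) x := by
        have h := ((hasDerivAt_pow 2 x).neg).div_const 2
        refine h.congr_deriv ?_
        norm_num; ring
      simpa [mul_comm] using hinner.exp
    have h2 : HasDerivAt (fun x : ℝ => erf (a * x / Real.sqrt 2))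
        (2 / Real.sqrt π * Real.exp (-(a * x / Real.sqrt 2) ^ 2) * (a / Real.sqrt 2)) x := by
      have hinner : HasDerivAt (fun x : ℝ => a * x / Real.sqrt 2) (a / Real.sqrt 2) x := by
        simpa using ((hasDerivAt_id x).const_mul a).div_const (Real.sqrt 2)
      exact (erf_hasDerivAt _).comp x hinner
    have h3 : HasDerivAt (fun x : ℝ => erf (b * x / Real.sqrt 2))
        (2 / Real.sqrt π * Real.exp (-(b * x / Real.sqrt 2) ^ 2) * (b / Real.sqrt 2)) x := by
      have hinner : HasDerivAt (fun x : ℝ => b * x / Real.sqrt 2) (b / Real.sqrt 2) x := by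
        simpa using ((hasDerivAt_id x).const_mul b).div_const (Real.sqrt 2)
      exact (erf_hasDerivAt _).comp x hinner
    have hd : HasDerivAt (fun x =>
        -Real.exp (-x ^ 2 / 2) * erf (a * x / Real.sqrt 2) + a / b * erf (b * x / Real.sqrt 2))
        (-((-x * Real.exp (-x ^ 2 / 2)) * erf (a * x / Real.sqrt 2) +
            Real.exp (-x ^ 2 / 2) *
              (2 / Real.sqrt π * Real.exp (-(a * x / Real.sqrt 2) ^ 2) * (a / Real.sqrt 2))) +
          a / b * (2 / Real.sqrt π * Real.exp (-(b * x / Real.sqrt 2) ^ 2) * (b / Real.sqrt 2)))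
        x := by
      have := ((h1.mul h2).neg).add (h3.const_mul (a / b))
      simp only [neg_mul] at this ⊢; exact this
    convert hd using 1
    have ha2 : (a * x / Real.sqrt 2) ^ 2 = a ^ 2 * x ^ 2 / 2 := by
      rw [div_pow, mul_pow, hs2sq]
    have hb2 : (b * x / Real.sqrt 2) ^ 2 = (1 + a ^ 2) * x ^ 2 / 2 := by
      rw [div_pow, mul_pow, hs2sq, hbsq]
    have key : Real.exp (-x ^ 2 / 2) *
        (2 / Real.sqrt π * Real.exp (-(a ^ 2 * x ^ 2 / 2)) * (a / Real.sqrt 2)) =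
        a / b * (2 / Real.sqrt π * Real.exp (-((1 + a ^ 2) * x ^ 2 / 2)) * (b / Real.sqrt 2)) := by
      have hcoef : a / b * (b / Real.sqrt 2) = a / Real.sqrt 2 := by
        field_simp
      have hexp : Real.exp (-x ^ 2 / 2) * Real.exp (-(a ^ 2 * x ^ 2 / 2)) =
          Real.exp (-((1 + a ^ 2) * x ^ 2 / 2)) := by
        rw [← Real.exp_add]; ring_nf
      calc Real.exp (-x ^ 2 / 2) *
            (2 / Real.sqrt π * Real.exp (-(a ^ 2 * x ^ 2 / 2)) * (a / Real.sqrt 2))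
          = 2 / Real.sqrt π *
            (Real.exp (-x ^ 2 / 2) * Real.exp (-(a ^ 2 * x ^ 2 / 2))) * (a / Real.sqrt 2) := by
            ring
        _ = 2 / Real.sqrt π * Real.exp (-((1 + a ^ 2) * x ^ 2 / 2)) * (a / Real.sqrt 2) := by
            rw [hexp]
        _ = a / b * (2 / Real.sqrt π * Real.exp (-((1 + a ^ 2) * x ^ 2 / 2)) *
              (b / Real.sqrt 2)) := by rw [← hcoef]; ring
    rw [ha2, hb2, key]; ring
  have hint : IntegrableOn
      (fun x => x * erf (a * x / Real.sqrt 2) * Real.exp (-x ^ 2 / 2)) (Ioi 0) := by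
    have hg : IntegrableOn (fun x : ℝ => x * Real.exp (-(1/2) * x ^ 2)) (Ioi 0) :=
      (integrable_mul_exp_neg_mul_sq one_half_pos).integrableOn
    apply hg.mono'
    · exact ((continuous_id.mul (erf_continuous.comp (by continuity))).mul
        (by continuity)).aestronglyMeasurable.restrict
    · filter_upwards [ae_restrict_mem measurableSet_Ioi] with x hx
      have hx0 : (0:ℝ) ≤ x := le_of_lt hx
      have : ‖x * erf (a * x / Real.sqrt 2) * Real.exp (-x ^ 2 / 2)‖ =
          x * |erf (a * x / Real.sqrt 2)| * Real.exp (-x ^ 2 / 2) := by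
        rw [Real.norm_eq_abs, abs_mul, abs_mul, abs_of_nonneg hx0,
          abs_of_nonneg (Real.exp_pos _).le]
      rw [this, show -(1/2) * x ^ 2 = -x ^ 2 / 2 by ring]
      calc x * |erf (a * x / Real.sqrt 2)| * Real.exp (-x ^ 2 / 2)
          ≤ x * 1 * Real.exp (-x ^ 2 / 2) :=
            mul_le_mul_of_nonneg_right
              (mul_le_mul_of_nonneg_left (erf_abs_le _) hx0) (Real.exp_pos _).le
        _ = x * Real.exp (-x ^ 2 / 2) := by ring
  have htend : Tendsto (fun x =>
      -Real.exp (-x ^ 2 / 2) * erf (a * x / Real.sqrt 2) + a / b * erf (b * x / Real.sqrt 2))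
      atTop (𝓝 (a / b)) := by
    have hexp0 : Tendsto (fun x : ℝ => Real.exp (-x ^ 2 / 2)) atTop (𝓝 0) := by
      have h2 : Tendsto (fun x : ℝ => x ^ 2 / 2) atTop atTop :=
        (tendsto_pow_atTop (by norm_num)).atTop_div_const (by norm_num)
      have h1 : Tendsto (fun x : ℝ => -x ^ 2 / 2) atTop atBot := by
        simpa [Function.comp_def, neg_div] using tendsto_neg_atTop_atBot.comp h2
      exact Real.tendsto_exp_atBot.comp h1
    have t1 : Tendsto (fun x => -Real.exp (-x ^ 2 / 2) * erf (a * x / Real.sqrt 2)) atTop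
        (𝓝 0) := by
      refine squeeze_zero_norm (fun x => ?_) hexp0
      rw [Real.norm_eq_abs, abs_mul, abs_neg, abs_of_nonneg (Real.exp_pos _).le]
      calc Real.exp (-x ^ 2 / 2) * |erf (a * x / Real.sqrt 2)|
          ≤ Real.exp (-x ^ 2 / 2) * 1 :=
            mul_le_mul_of_nonneg_left (erf_abs_le _) (Real.exp_pos _).le
        _ = Real.exp (-x ^ 2 / 2) := mul_one _
    have hin : Tendsto (fun x : ℝ => b * x / Real.sqrt 2) atTop atTop := by
      apply Tendsto.atTop_div_const hs2
      exact tendsto_id.const_mul_atTop hb0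
    have t2 : Tendsto (fun x => a / b * erf (b * x / Real.sqrt 2)) atTop
        (𝓝 (a / b * 1)) := (erf_tendsto_one.comp hin).const_mul _
    have := t1.add t2
    simpa using this
  have := integral_Ioi_of_hasDerivAt_of_tendsto' hderiv hint htend
  rw [this]
  simp [erf_zero]
end

section
/- Let 0 < s < 1 and for x > 0 define M₁(s, x) := ((1 − s + s x²)/x) · erf( x √s / √(2(1 − s)) ) + √(2 s (1 − s) / π) · exp( − s x² / (2(1 − s)) ). Then ∫₀^∞ x · M₁(s, x) · exp(-x²/2) dx = √(2/π) · ( arctan(√(s/(1 − s))) + √(s(1 − s)) ). -/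
open Real MeasureTheory Set Filter Topology Asymptotics

section auxlemmas

private lemma gexp_tendsto {b : ℝ} (hb : 0 < b) :
    Tendsto (fun x : ℝ => Real.exp (-b * x ^ 2)) atTop (𝓝 0) :=
  Real.tendsto_exp_atBot.comp
    ((tendsto_pow_atTop two_ne_zero).const_mul_atTop_of_neg (neg_lt_zero.2 hb))

private lemma sq_gexp_tendsto {b : ℝ} (hb : 0 < b) :
    Tendsto (fun x : ℝ => x ^ 2 * Real.exp (-b * x ^ 2)) atTop (𝓝 0) := by
  have hneg : Tendsto (fun x : ℝ => -(1/2) * x) atTop atBot :=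
    tendsto_id.const_mul_atTop_of_neg (by norm_num)
  have hv : Tendsto (fun x : ℝ => Real.exp (-(1/2) * x)) atTop (𝓝 0) :=
    Real.tendsto_exp_atBot.comp hneg
  have h := (rpow_mul_exp_neg_mul_sq_isLittleO_exp_neg hb 2).tendsto_zero_of_tendsto hv
  refine h.congr' ?_
  filter_upwards [eventually_ge_atTop (0:ℝ)] with x hx
  norm_cast

private lemma aux1 {b : ℝ} (hb : 0 < b) :
    ∫ x in Ioi (0:ℝ), x * Real.exp (-b * x ^ 2) = 1 / (2 * b) := by
  have A : ∀ x ∈ Ici (0:ℝ), HasDerivAt (fun x => -(2*b)⁻¹ * Real.exp (-b * x ^ 2))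
      (x * Real.exp (-b * x ^ 2)) x := by
    intro x _
    have := (((hasDerivAt_pow 2 x).const_mul (-b)).exp).const_mul (-(2*b)⁻¹)
    refine this.congr_deriv ?_
    field_simp
    ring
  have B : Tendsto (fun x : ℝ => -(2*b)⁻¹ * Real.exp (-b * x ^ 2)) atTop (𝓝 (-(2*b)⁻¹ * 0)) :=
    (gexp_tendsto hb).const_mul _
  rw [integral_Ioi_of_hasDerivAt_of_tendsto' A (integrable_mul_exp_neg_mul_sq hb).integrableOn B]
  norm_num

private lemma integrableOn_cube_gexp {b : ℝ} (hb : 0 < b) :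
    IntegrableOn (fun x : ℝ => x ^ 3 * Real.exp (-b * x ^ 2)) (Ioi 0) := by
  refine (integrableOn_rpow_mul_exp_neg_mul_sq hb (by norm_num : (-1:ℝ) < 3)).congr_fun ?_
    measurableSet_Ioi
  intro x hx
  show x ^ (3:ℝ) * _ = _
  norm_cast

private lemma aux3 {b : ℝ} (hb : 0 < b) :
    ∫ x in Ioi (0:ℝ), x ^ 3 * Real.exp (-b * x ^ 2) = 1 / (2 * b ^ 2) := by
  have hb' : b ≠ 0 := ne_of_gt hb
  have A : ∀ x ∈ Ici (0:ℝ), HasDerivAt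
      (fun x : ℝ => -(x ^ 2 / (2 * b) + 1 / (2 * b ^ 2)) * Real.exp (-b * x ^ 2))
      (x ^ 3 * Real.exp (-b * x ^ 2)) x := by
    intro x _
    have h1 : HasDerivAt (fun x : ℝ => -(x ^ 2 / (2 * b) + 1 / (2 * b ^ 2)))
        (-(2 * x / (2 * b))) x := by
      have := ((hasDerivAt_pow 2 x).div_const (2 * b)).add_const (1 / (2 * b ^ 2))
      exact this.neg.congr_deriv (by norm_num)
    have h2 : HasDerivAt (fun x : ℝ => Real.exp (-b * x ^ 2))
        (Real.exp (-b * x ^ 2) * (-b * (2 * x))) x := by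
      simpa using (((hasDerivAt_pow 2 x).const_mul (-b)).exp)
    have h3 := h1.mul h2
    have heq : -(2 * x / (2 * b)) * Real.exp (-b * x ^ 2) +
        -(x ^ 2 / (2 * b) + 1 / (2 * b ^ 2)) * (Real.exp (-b * x ^ 2) * (-b * (2 * x)))
        = x ^ 3 * Real.exp (-b * x ^ 2) := by
      field_simp
      ring
    rwa [heq] at h3
  have B : Tendsto
      (fun x : ℝ => -(x ^ 2 / (2 * b) + 1 / (2 * b ^ 2)) * Real.exp (-b * x ^ 2)) atTop (𝓝 0) := by
    have T := ((sq_gexp_tendsto hb).const_mul (-(1/(2*b)))).add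
      ((gexp_tendsto hb).const_mul (-(1/(2*b^2))))
    rw [show (-(1/(2*b)) * 0 + -(1/(2*b^2)) * 0 : ℝ) = 0 by ring] at T
    refine T.congr fun x => by ring
  rw [integral_Ioi_of_hasDerivAt_of_tendsto' A (integrableOn_cube_gexp hb) B]
  field_simp
  simp

end auxlemmas

/-- Mean of the Brownian meander at time `s` conditioned to equal `x` at time 1. -/
noncomputable def M1 (s x : ℝ) : ℝ :=
  (1 - s + s * x ^ 2) / x * erf (x * Real.sqrt s / Real.sqrt (2 * (1 - s))) +
    Real.sqrt (2 * s * (1 - s) / π) * Real.exp (-(s * x ^ 2) / (2 * (1 - s)))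

set_option maxHeartbeats 2000000

theorem stmt10 (s : ℝ) (hs : 0 < s) (hs1 : s < 1) :
    ∫ x in Ioi (0 : ℝ), x * M1 s x * Real.exp (-x ^ 2 / 2) =
      Real.sqrt (2 / π) * (Real.arctan (Real.sqrt (s / (1 - s))) + Real.sqrt (s * (1 - s))) := by
  have hp : (0:ℝ) < 1 - s := by linarith
  set p : ℝ := 1 - s with hpd
  set a : ℝ := Real.sqrt s / Real.sqrt (2 * p) with had
  have ha : 0 < a := div_pos (Real.sqrt_pos.2 hs) (Real.sqrt_pos.2 (by linarith))
  set C : ℝ := Real.sqrt (2 * s * p / π) with hCd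
  set H : ℝ → ℝ → ℝ :=
    fun x t => 2 / Real.sqrt π * ((p + s * x ^ 2) * (x * Real.exp (-(t ^ 2 + 1/2) * x ^ 2)))
    with hHdef
  -- step 1 : integrand decomposition
  have step1 : ∀ x ∈ Ioi (0:ℝ), x * M1 s x * Real.exp (-x ^ 2 / 2)
      = (∫ t in Ioc 0 a, H x t) + C * (x * Real.exp (-(1/(2*p)) * x ^ 2)) := by
    intro x hx
    have hx0 : (0:ℝ) < x := hx
    have hA : (∫ t in Ioc 0 a, H x t)
        = (p + s * x ^ 2) * (2 / Real.sqrt π * ∫ u in (0:ℝ)..(a*x), Real.exp (-u ^ 2))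
          * Real.exp (-x ^ 2 / 2) := by
      rw [← intervalIntegral.integral_of_le ha.le]
      have e1 : ∀ t : ℝ, H x t = (2 / Real.sqrt π * ((p + s * x ^ 2)
          * (x * Real.exp (-x ^ 2 / 2)))) * Real.exp (-(t * x) ^ 2) := by
        intro t
        simp only [hHdef]
        rw [show -(t ^ 2 + 1/2) * x ^ 2 = -x ^ 2 / 2 + -(t*x) ^ 2 by ring, Real.exp_add]
        ring
      simp_rw [e1]
      rw [intervalIntegral.integral_const_mul]
      have e2 : (∫ t in (0:ℝ)..a, Real.exp (-(t * x) ^ 2))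
          = x⁻¹ • ∫ u in (0:ℝ)..(a*x), Real.exp (-u ^ 2) := by
        have := intervalIntegral.integral_comp_mul_right
          (a := (0:ℝ)) (b := a) (f := fun u => Real.exp (-u ^ 2)) hx0.ne'
        simpa using this
      rw [e2, smul_eq_mul]
      field_simp
    rw [hCd, hA, M1, erf]
    have harg : x * Real.sqrt s / Real.sqrt (2 * (1 - s)) = a * x := by
      rw [had, hpd]; ring
    rw [harg]
    have hexp : Real.exp (-(s * x ^ 2) / (2 * (1 - s))) * Real.exp (-x ^ 2 / 2)
        = Real.exp (-x ^ 2 / (2 * (1 - s))) := by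
      rw [← Real.exp_add]
      congr 1
      have : (1:ℝ) - s ≠ 0 := by linarith
      field_simp
      ring
    rw [hpd]
    field_simp
    linear_combination (norm := ring_nf) (x * Real.sqrt π * Real.sqrt (s * (1 - s) * 2 / π)) * hexp
  -- integrability of H on the product
  have HInt : Integrable (Function.uncurry H)
      ((volume.restrict (Ioi 0)).prod (volume.restrict (Ioc 0 a))) := by
    have hcont : Continuous (Function.uncurry H) := by
      rw [hHdef]; fun_prop
    set g : ℝ → ℝ := fun x => a * (2 / Real.sqrt π * ((p + s * x ^ 2)
        * (x * Real.exp (-(1/2) * x ^ 2)))) with hgdef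
    have hgint : Integrable g (volume.restrict (Ioi 0)) := by
      have hrw : g = fun x => (a * (2 / Real.sqrt π) * p) * (x * Real.exp (-(1/2) * x ^ 2))
          + (a * (2 / Real.sqrt π) * s) * (x ^ 3 * Real.exp (-(1/2) * x ^ 2)) := by
        funext x; rw [hgdef]; ring
      rw [hrw]
      exact (((integrable_mul_exp_neg_mul_sq (by norm_num : (0:ℝ) < 1/2)).const_mul
        _).restrict).add ((integrableOn_cube_gexp (by norm_num : (0:ℝ) < 1/2)).const_mul _)
    refine (integrable_prod_iff hcont.aestronglyMeasurable).2 ⟨?_, ?_⟩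
    · refine Eventually.of_forall fun x => ?_
      exact ((hcont.comp (Continuous.prodMk_right x)).integrableOn_Ioc)
    · refine Integrable.mono' hgint ?_ ?_
      · exact (hcont.aestronglyMeasurable.norm).integral_prod_right'
      · filter_upwards [ae_restrict_mem measurableSet_Ioi] with x hx
        have hx0 : (0:ℝ) < x := hx
        have hbound : ∀ t : ℝ, ‖H x t‖ ≤ 2 / Real.sqrt π * ((p + s * x ^ 2)
            * (x * Real.exp (-(1/2) * x ^ 2))) := by
          intro t
          have hnn : 0 ≤ H x t := by rw [hHdef]; positivity
          rw [Real.norm_of_nonneg hnn]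
          simp only [hHdef]
          have : Real.exp (-(t ^ 2 + 1/2) * x ^ 2) ≤ Real.exp (-(1/2) * x ^ 2) := by
            apply Real.exp_le_exp.2
            nlinarith [sq_nonneg t, sq_nonneg x]
          have hπ : (0:ℝ) < Real.sqrt π := Real.sqrt_pos.2 Real.pi_pos
          gcongr
        simp only [Function.uncurry_apply_pair]
        have hnn2 : 0 ≤ ∫ t in Ioc 0 a, ‖H x t‖ :=
          integral_nonneg fun t => norm_nonneg _
        rw [Real.norm_of_nonneg hnn2]
        calc ∫ t in Ioc 0 a, ‖H x t‖
            ≤ ∫ _t in Ioc (0:ℝ) a, 2 / Real.sqrt π * ((p + s * x ^ 2)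
              * (x * Real.exp (-(1/2) * x ^ 2))) := by
              refine setIntegral_mono_on ?_ (integrable_const _) measurableSet_Ioc
                fun t _ => hbound t
              exact ((hcont.comp (Continuous.prodMk_right x)).norm).integrableOn_Ioc
          _ = g x := by
              rw [setIntegral_const, measureReal_def, Real.volume_Ioc, smul_eq_mul, hgdef]
              rw [ENNReal.toReal_ofReal (by linarith)]
              ring_nf
  -- inner integral value
  have inner : ∀ t : ℝ, ∫ x in Ioi (0:ℝ), H x t
      = 2 / Real.sqrt π * (p / (2 * (t ^ 2 + 1/2)) + s / (2 * (t ^ 2 + 1/2) ^ 2)) := by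
    intro t
    have hc : (0:ℝ) < t ^ 2 + 1/2 := by positivity
    have heq : ∀ x ∈ Ioi (0:ℝ), H x t =
        2 / Real.sqrt π * p * (x * Real.exp (-(t ^ 2 + 1/2) * x ^ 2))
        + 2 / Real.sqrt π * s * (x ^ 3 * Real.exp (-(t ^ 2 + 1/2) * x ^ 2)) := by
      intro x _; simp only [hHdef]; ring
    rw [setIntegral_congr_fun measurableSet_Ioi heq, integral_add
      (((integrable_mul_exp_neg_mul_sq hc).const_mul _).restrict)
      ((integrableOn_cube_gexp hc).const_mul _),
      integral_const_mul, integral_const_mul, aux1 hc, aux3 hc]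
    ring
  -- outer integral value
  have outer : (∫ t in (0:ℝ)..a,
        2 / Real.sqrt π * (p / (2 * (t ^ 2 + 1/2)) + s / (2 * (t ^ 2 + 1/2) ^ 2)))
      = 2 / Real.sqrt π * ((Real.sqrt 2)⁻¹ * Real.arctan (Real.sqrt 2 * a)
          + s / 2 * (a / (a ^ 2 + 1/2))) := by
    have h2 : (0:ℝ) < Real.sqrt 2 := Real.sqrt_pos.2 (by norm_num)
    have hD : ∀ t ∈ uIcc (0:ℝ) a, HasDerivAt
        (fun t : ℝ => 2 / Real.sqrt π * ((Real.sqrt 2)⁻¹ * Real.arctan (Real.sqrt 2 * t)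
            + s / 2 * (t / (t ^ 2 + 1/2))))
        (2 / Real.sqrt π * (p / (2 * (t ^ 2 + 1/2)) + s / (2 * (t ^ 2 + 1/2) ^ 2))) t := by
      intro t _
      have hc : (0:ℝ) < t ^ 2 + 1/2 := by positivity
      have h1 : HasDerivAt (fun t : ℝ => Real.arctan (Real.sqrt 2 * t))
          (1 / (1 + (Real.sqrt 2 * t) ^ 2) * (Real.sqrt 2 * 1)) t :=
        HasDerivAt.comp t (Real.hasDerivAt_arctan _) ((hasDerivAt_id t).const_mul _)
      have h2' : HasDerivAt (fun t : ℝ => t / (t ^ 2 + 1/2))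
          ((1 * (t ^ 2 + 1/2) - t * (2 * t ^ 1)) / (t ^ 2 + 1/2) ^ 2) t :=
        (hasDerivAt_id t).div ((hasDerivAt_pow 2 t).add_const (1/2)) hc.ne'
      have h3 := ((h1.const_mul ((Real.sqrt 2)⁻¹)).add (h2'.const_mul (s/2))).const_mul
        (2 / Real.sqrt π)
      refine h3.congr_deriv ?_
      have hsq : (Real.sqrt 2 * t) ^ 2 = 2 * t ^ 2 := by
        rw [mul_pow, Real.sq_sqrt (by norm_num : (0:ℝ) ≤ 2)]
      rw [hsq, hpd]
      have h12 : (0:ℝ) < 1 + 2 * t ^ 2 := by positivity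
      field_simp
      ring
    have hcont : Continuous (fun t : ℝ =>
        2 / Real.sqrt π * (p / (2 * (t ^ 2 + 1/2)) + s / (2 * (t ^ 2 + 1/2) ^ 2))) := by
      refine continuous_const.mul (Continuous.add ?_ ?_)
      · exact continuous_const.div (by continuity) (fun t => by positivity)
      · exact continuous_const.div (by continuity) (fun t => by positivity)
    rw [intervalIntegral.integral_eq_sub_of_hasDerivAt hD (hcont.intervalIntegrable _ _)]
    simp [Real.arctan_zero]
  -- assemble
  rw [setIntegral_congr_fun measurableSet_Ioi step1]
  have hI2int : Integrable (fun x => C * (x * Real.exp (-(1/(2*p)) * x ^ 2)))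
      (volume.restrict (Ioi 0)) :=
    ((integrable_mul_exp_neg_mul_sq (by positivity : (0:ℝ) < 1/(2*p))).const_mul C).restrict
  have hI1int : Integrable (fun x => ∫ t in Ioc 0 a, H x t) (volume.restrict (Ioi 0)) :=
    HInt.integral_prod_left
  rw [integral_add hI1int hI2int]
  have e2 : ∫ x in Ioi (0:ℝ), C * (x * Real.exp (-(1/(2*p)) * x ^ 2)) = C * p := by
    rw [integral_const_mul, aux1 (by positivity : (0:ℝ) < 1/(2*p))]
    field_simp
  have e1 : ∫ x in Ioi (0:ℝ), (∫ t in Ioc 0 a, H x t)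
      = 2 / Real.sqrt π * ((Real.sqrt 2)⁻¹ * Real.arctan (Real.sqrt 2 * a)
          + s / 2 * (a / (a ^ 2 + 1/2))) := by
    rw [integral_integral_swap HInt]
    rw [← outer, intervalIntegral.integral_of_le ha.le]
    exact setIntegral_congr_fun measurableSet_Ioc (fun t _ => inner t)
  rw [e1, e2]
  -- final algebra
  have hπ : (0:ℝ) < π := Real.pi_pos
  have h2p : Real.sqrt (2 * p) * Real.sqrt (2 * p) = 2 * p :=
    Real.mul_self_sqrt (by positivity)
  have h2p0 : (0:ℝ) < Real.sqrt (2 * p) := Real.sqrt_pos.2 (by positivity)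
  have hπ0 : (0:ℝ) < Real.sqrt π := Real.sqrt_pos.2 hπ
  have h20 : (0:ℝ) < Real.sqrt 2 := Real.sqrt_pos.2 (by norm_num)
  have h22 : Real.sqrt 2 * Real.sqrt 2 = 2 := Real.mul_self_sqrt (by norm_num)
  have hs0 : (0:ℝ) < Real.sqrt s := Real.sqrt_pos.2 hs
  have hss : Real.sqrt s * Real.sqrt s = s := Real.mul_self_sqrt hs.le
  have e_arct : Real.sqrt 2 * a = Real.sqrt (s / p) := by
    rw [had, show s / p = (2 * s) / (2 * p) by
        rw [mul_comm 2 s, mul_comm 2 p, mul_div_mul_right _ _ (two_ne_zero)],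
      Real.sqrt_div (by positivity) (2*p), Real.sqrt_mul (by norm_num : (0:ℝ) ≤ 2) s]
    field_simp
  have ea2 : a ^ 2 + 1/2 = 1 / (2 * p) := by
    have haa : a ^ 2 = s / (2 * p) := by
      rw [had, div_pow, sq, sq, hss, h2p]
    rw [haa, hpd]
    have h1s : (1:ℝ) - s ≠ 0 := by linarith
    field_simp
    ring
  have eav : a / (a ^ 2 + 1/2) = Real.sqrt (2 * s * p) := by
    rw [ea2, had, show (2:ℝ) * s * p = (2 * p) * s by ring,
      Real.sqrt_mul (by positivity : (0:ℝ) ≤ 2*p) s]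
    have hpp : Real.sqrt p * Real.sqrt p = p := Real.mul_self_sqrt hp.le
    field_simp
    linear_combination (-1) * h2p + (2 * Real.sqrt s - 2) * hpd
  have eC : C = Real.sqrt (2 * s * p) / Real.sqrt π := by
    rw [hCd, Real.sqrt_div (by positivity) π]
  have e2π : Real.sqrt (2 / π) = Real.sqrt 2 / Real.sqrt π :=
    Real.sqrt_div (by norm_num) π
  have esp : Real.sqrt (2 * s * p) = Real.sqrt 2 * Real.sqrt (s * p) := by
    rw [show (2:ℝ) * s * p = 2 * (s * p) by ring, Real.sqrt_mul (by norm_num : (0:ℝ) ≤ 2)]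
  rw [e_arct, eav, eC, e2π, esp]
  have h2ne : Real.sqrt 2 ≠ 0 := h20.ne'
  have hπne : Real.sqrt π ≠ 0 := hπ0.ne'
  generalize Real.arctan (Real.sqrt (s/p)) = A
  generalize Real.sqrt (s*p) = B
  rw [hpd]
  field_simp
  ring_nf
  linear_combination (-A) * h22
end
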